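/- The Pastro polynomials and their biorthogonal partners satisfy the second Baxter recurrence: define Q_n(x) = R_n(x^{-1};a,b;q) for x ≠ 0. Then for every nonnegative integer n and all real x ≠ 0, Q_{n+1}(x) = x Q_n(x) - β_n x^n P_n(x^{-1};a,b;q), where β_n = -(a^{-1} b)^{-n-1} (b q^{-1};q)_{n+1} / (a b^{-1} q;q)_{n+1}. -/

import Mathlib

noncomputable def qPoch (q z : ℝ) (k : ℕ) : ℝ :=
  ∏ j ∈ Finset.range k, (1 - z * q ^ j)

noncomputable def pastroCoeff (q a b : ℝ) (n k : ℕ) : ℝ :=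
  (qPoch q (a⁻¹ * b * q ^ (1 - (n : ℤ))) n * qPoch q q n /
      (qPoch q (q ^ (-(n : ℤ))) n * qPoch q b n)) *
    (qPoch q (q ^ (-(n : ℤ))) k * qPoch q b k /
      (qPoch q (a⁻¹ * b * q ^ (1 - (n : ℤ))) k * qPoch q q k))

noncomputable def pastroP (q a b : ℝ) (n : ℕ) (x : ℝ) : ℝ :=
  ∑ k ∈ Finset.range (n + 1), pastroCoeff q a b n k * x ^ k

noncomputable def pastroR (q a b : ℝ) (n : ℕ) (x : ℝ) : ℝ :=
  (qPoch q (q ^ (-(n : ℤ))) n * qPoch q (b * q⁻¹) n /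
      (qPoch q (a⁻¹ * b * q ^ (-(n : ℤ))) n * qPoch q q n)) *
    ∑ k ∈ Finset.range (n + 1),
      (qPoch q (q ^ (-(n : ℤ))) k * qPoch q (a * b⁻¹ * q) k /
          (qPoch q (b⁻¹ * q ^ (2 - (n : ℤ))) k * qPoch q q k)) *
        (q ^ 2 / (a * x)) ^ k

/-! ### auxiliary definitions -/

noncomputable def AAx (q a b : ℝ) (n : ℕ) : ℝ :=
  qPoch q (q ^ (-(n : ℤ))) n * qPoch q (b * q⁻¹) n /
      (qPoch q (a⁻¹ * b * q ^ (-(n : ℤ))) n * qPoch q q n)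

noncomputable def ttx (q a b : ℝ) (n k : ℕ) : ℝ :=
  qPoch q (q ^ (-(n : ℤ))) k * qPoch q (a * b⁻¹ * q) k /
      (qPoch q (b⁻¹ * q ^ (2 - (n : ℤ))) k * qPoch q q k)

noncomputable def Bvx (q a b : ℝ) (n : ℕ) : ℝ :=
  -(a⁻¹ * b) ^ (-(n : ℤ) - 1) * qPoch q (b * q⁻¹) (n + 1) /
            qPoch q (a * b⁻¹ * q) (n + 1)

lemma pastroR_eq (q a b : ℝ) (n : ℕ) (x : ℝ) :
    pastroR q a b n x
      = AAx q a b n * ∑ k ∈ Finset.range (n + 1), ttx q a b n k * (q ^ 2 / (a * x)) ^ k := rfl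

/-! ### basic qPoch lemmas -/

lemma qPoch_succ (q z : ℝ) (k : ℕ) :
    qPoch q z (k + 1) = qPoch q z k * (1 - z * q ^ k) := Finset.prod_range_succ _ _

lemma qPoch_succ' (q z : ℝ) (k : ℕ) :
    qPoch q z (k + 1) = (1 - z) * qPoch q (z * q) k := by
  rw [qPoch, Finset.prod_range_succ']
  simp only [pow_zero, mul_one]
  rw [mul_comm, qPoch]
  congr 1
  refine Finset.prod_congr rfl fun i _ => ?_
  ring

lemma qPoch_zero (q z : ℝ) : qPoch q z 0 = 1 := rfl

lemma qPoch_ne_zero (q z : ℝ) (k : ℕ) (h : ∀ j, j < k → z * q ^ j ≠ 1) :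
    qPoch q z k ≠ 0 := by
  rw [qPoch]
  apply Finset.prod_ne_zero_iff.mpr
  intro j hj
  rw [Finset.mem_range] at hj
  exact sub_ne_zero.mpr (Ne.symm (h j hj))

lemma qPoch_pair (q : ℝ) (hq : q ≠ 0) (w : ℝ) (hw : w ≠ 0) (N : ℕ) :
    qPoch q (w * q ^ (-(N : ℤ))) N * qPoch q q N
      = w ^ N * (qPoch q (q ^ (-(N : ℤ))) N * qPoch q (w⁻¹ * q) N) := by
  rw [qPoch, qPoch, qPoch, qPoch]
  rw [← Finset.prod_range_reflect (fun j => (1 - q * q ^ j)) N]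
  rw [← Finset.prod_range_reflect (fun j => (1 - w⁻¹ * q * q ^ j)) N]
  rw [show (w ^ N : ℝ) = ∏ _x ∈ Finset.range N, w by
    rw [Finset.prod_const, Finset.card_range]]
  rw [← Finset.prod_mul_distrib, ← Finset.prod_mul_distrib, ← Finset.prod_mul_distrib]
  refine Finset.prod_congr rfl fun i hi => ?_
  rw [Finset.mem_range] at hi
  have hs : (q : ℝ) ^ (-(N : ℤ)) * q ^ i ≠ 0 := by positivity
  have hstep : q * q ^ (N - 1 - i) = q ^ (N - i) := by
    rw [← pow_succ']
    congr 1
    omega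
  have key : ((q : ℝ) ^ (-(N : ℤ)) * q ^ i) * (q * q ^ (N - 1 - i)) = 1 := by
    rw [hstep, ← zpow_natCast q i, ← zpow_natCast q (N - i), ← zpow_add₀ hq, ← zpow_add₀ hq,
      show (-(N : ℤ) + i + (N - i : ℕ)) = 0 by omega, zpow_zero]
  have ht : q * q ^ (N - 1 - i) = ((q : ℝ) ^ (-(N : ℤ)) * q ^ i)⁻¹ :=
    (inv_eq_of_mul_eq_one_right key).symm
  rw [mul_assoc w⁻¹, ht, mul_assoc w]
  generalize hgen : (q : ℝ) ^ (-(N : ℤ)) * q ^ i = s at hs ⊢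
  field_simp
  ring

/-! ### nonvanishing -/

section NZ
variable {q a b : ℝ} (hq : q ≠ 0) (hq1 : ∀ k : ℤ, k ≠ 0 → q ^ k ≠ 1)
  (ha : a ≠ 0) (hb : b ≠ 0)
  (hbq : ∀ m : ℤ, b * q ^ m ≠ 1) (habq : ∀ m : ℤ, a⁻¹ * b * q ^ m ≠ 1)

include hq hbq in
lemma fne_binv (e : ℤ) (j : ℕ) : b⁻¹ * q ^ e * q ^ j ≠ 1 := by
  have h := hbq (-(e + j))
  intro hcon
  apply h
  have : b⁻¹ * q ^ e * q ^ j = (b * q ^ (-(e + j)))⁻¹ := by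
    rw [mul_inv, ← zpow_neg, neg_neg, zpow_add₀ hq, zpow_natCast, mul_assoc]
  rw [this] at hcon
  rw [← inv_eq_one]
  exact hcon

lemma inv_trick {u : ℝ} (h : u ≠ 1) : u⁻¹ ≠ 1 :=
  fun hc => h (by rw [← inv_inv u, hc, inv_one])

include habq in
lemma fne_abq (j : ℕ) : a * b⁻¹ * q * q ^ j ≠ 1 := by
  have h := inv_trick (habq (-(1 + (j : ℤ))))
  have e : (a⁻¹ * b * q ^ (-(1 + (j : ℤ))))⁻¹ = a * b⁻¹ * q * q ^ j := by
    rw [mul_inv, mul_inv, inv_inv, zpow_neg, inv_inv,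
      show (1 + (j : ℤ)) = ((j + 1 : ℕ) : ℤ) by push_cast; ring, zpow_natCast, pow_succ']
    ring
  rwa [e] at h

include hq habq in
lemma fne_ab (e : ℤ) (j : ℕ) : a⁻¹ * b * q ^ e * q ^ j ≠ 1 := by
  have h := habq (e + j)
  rw [zpow_add₀ hq, zpow_natCast, ← mul_assoc] at h
  exact h

include hq hbq in
lemma fne_b (e : ℤ) (j : ℕ) : b * q ^ e * q ^ j ≠ 1 := by
  have h := hbq (e + j)
  rw [zpow_add₀ hq, zpow_natCast, ← mul_assoc] at h
  exact h

include hq1 in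
lemma fne_q (j : ℕ) : q * q ^ j ≠ 1 := by
  have h := hq1 ((j + 1 : ℕ) : ℤ) (by exact_mod_cast Nat.succ_ne_zero j)
  rw [zpow_natCast] at h
  rwa [pow_succ'] at h

include hq1 in
lemma fne_qn (hq : q ≠ 0) (e : ℤ) (j : ℕ) (hne : e + j ≠ 0) : (q : ℝ) ^ e * q ^ j ≠ 1 := by
  have h := hq1 (e + j) hne
  rwa [zpow_add₀ hq, zpow_natCast] at h


include hq1 in
lemma nz_poch_q (k : ℕ) : qPoch q q k ≠ 0 :=
  qPoch_ne_zero _ _ _ fun j _ => fne_q hq1 j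

include hbq in
lemma nz_poch_b (k : ℕ) : qPoch q b k ≠ 0 :=
  qPoch_ne_zero _ _ _ fun j _ => by have := hbq j; rwa [zpow_natCast] at this

include hq hbq in
lemma nz_poch_bq (k : ℕ) : qPoch q (b * q⁻¹) k ≠ 0 :=
  qPoch_ne_zero _ _ _ fun j _ => by
    have := fne_b hq hbq (-1) j; rwa [zpow_neg_one] at this

include hq hbq in
lemma nz_poch_binv (e : ℤ) (k : ℕ) : qPoch q (b⁻¹ * q ^ e) k ≠ 0 :=
  qPoch_ne_zero _ _ _ fun j _ => fne_binv hq hbq e j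

include hq habq in
lemma nz_poch_ab (e : ℤ) (k : ℕ) : qPoch q (a⁻¹ * b * q ^ e) k ≠ 0 :=
  qPoch_ne_zero _ _ _ fun j _ => fne_ab hq habq e j

include habq in
lemma nz_poch_abq (k : ℕ) : qPoch q (a * b⁻¹ * q) k ≠ 0 :=
  qPoch_ne_zero _ _ _ fun j _ => fne_abq habq j

include hq1 in
lemma nz_poch_qn (hq : q ≠ 0) (n k : ℕ) (hk : k ≤ n) : qPoch q (q ^ (-(n : ℤ))) k ≠ 0 :=
  qPoch_ne_zero _ _ _ fun j hj => fne_qn hq1 hq _ j (by omega)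

end NZ

section Main
variable {q a b : ℝ} (hq : q ≠ 0) (hq1 : ∀ k : ℤ, k ≠ 0 → q ^ k ≠ 1)
  (ha : a ≠ 0) (hb : b ≠ 0)
  (hbq : ∀ m : ℤ, b * q ^ m ≠ 1) (habq : ∀ m : ℤ, a⁻¹ * b * q ^ m ≠ 1)

set_option maxHeartbeats 2000000 in
include hq hq1 ha hb hbq habq in
lemma L1 (n i : ℕ) (hin : i ≤ n) :
    AAx q a b (n + 1) * ttx q a b (n + 1) (i + 1) * (q ^ 2 / a) ^ (i + 1) *
        ((1 - a * b⁻¹ * q ^ (n + 1)) * (1 - q ^ (i + 1)))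
      = (1 - q ^ (n + 1)) * (1 - a * b⁻¹ * q ^ (i + 1)) *
        (AAx q a b n * ttx q a b n i * (q ^ 2 / a) ^ i) := by
  have harg1 : (q : ℝ) ^ (-((n + 1 : ℕ) : ℤ)) * q = q ^ (-(n : ℤ)) := by
    rw [← zpow_add_one₀ hq]
    congr 1
    push_cast; ring
  have harg3 : a⁻¹ * b * q ^ (-((n + 1 : ℕ) : ℤ)) * q = a⁻¹ * b * q ^ (-(n : ℤ)) := by
    rw [mul_assoc, harg1]
  have harg7 : b⁻¹ * q ^ (2 - ((n + 1 : ℕ) : ℤ)) * q = b⁻¹ * q ^ (2 - (n : ℤ)) := by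
    rw [mul_assoc, ← zpow_add_one₀ hq]
    congr 2
    push_cast; ring
  have e1 : qPoch q (q ^ (-((n + 1 : ℕ) : ℤ))) (n + 1)
      = (1 - q ^ (-((n + 1 : ℕ) : ℤ))) * qPoch q (q ^ (-(n : ℤ))) n := by
    rw [qPoch_succ', harg1]
  have e5 : qPoch q (q ^ (-((n + 1 : ℕ) : ℤ))) (i + 1)
      = (1 - q ^ (-((n + 1 : ℕ) : ℤ))) * qPoch q (q ^ (-(n : ℤ))) i := by
    rw [qPoch_succ', harg1]
  have e3 : qPoch q (a⁻¹ * b * q ^ (-((n + 1 : ℕ) : ℤ))) (n + 1)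
      = (1 - a⁻¹ * b * q ^ (-((n + 1 : ℕ) : ℤ))) * qPoch q (a⁻¹ * b * q ^ (-(n : ℤ))) n := by
    rw [qPoch_succ', harg3]
  have e7 : qPoch q (b⁻¹ * q ^ (2 - ((n + 1 : ℕ) : ℤ))) (i + 1)
      = (1 - b⁻¹ * q ^ (2 - ((n + 1 : ℕ) : ℤ))) * qPoch q (b⁻¹ * q ^ (2 - (n : ℤ))) i := by
    rw [qPoch_succ', harg7]
  have z1 : (q : ℝ) ^ (-((n + 1 : ℕ) : ℤ)) = (q ^ (n + 1))⁻¹ := by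
    rw [zpow_neg, zpow_natCast]
  have z2 : (q : ℝ) ^ (2 - ((n + 1 : ℕ) : ℤ)) = q ^ 2 * (q ^ (n + 1))⁻¹ := by
    rw [show (2 - ((n + 1 : ℕ) : ℤ)) = -((n + 1 : ℕ) : ℤ) + ((2 : ℕ) : ℤ) by push_cast; ring,
      zpow_add₀ hq, z1, zpow_natCast, mul_comm]
  rw [AAx, AAx, ttx, ttx, e1, e5, e3, e7,
    qPoch_succ q (b * q⁻¹) n, qPoch_succ q q n, qPoch_succ q (a * b⁻¹ * q) i,
    qPoch_succ q q i, z1, z2]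
  have n1 : qPoch q (a⁻¹ * b * q ^ (-(n : ℤ))) n ≠ 0 := nz_poch_ab hq habq _ _
  have n2 : qPoch q q n ≠ 0 := nz_poch_q hq1 _
  have n3 : qPoch q (b⁻¹ * q ^ (2 - (n : ℤ))) i ≠ 0 := nz_poch_binv hq hbq _ _
  have n4 : qPoch q q i ≠ 0 := nz_poch_q hq1 _
  have n5 : (q : ℝ) ^ (n + 1) ≠ 0 := pow_ne_zero _ hq
  have s3 : (1 : ℝ) - a⁻¹ * b * q ^ (-((n + 1 : ℕ) : ℤ)) ≠ 0 :=
    sub_ne_zero.mpr (Ne.symm (habq _))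
  have s7 : (1 : ℝ) - b⁻¹ * q ^ (2 - ((n + 1 : ℕ) : ℤ)) ≠ 0 :=
    sub_ne_zero.mpr (Ne.symm (by
      have := fne_binv hq hbq (2 - ((n + 1 : ℕ) : ℤ)) 0
      simpa using this))
  have s1 : (1 : ℝ) - q ^ (-((n + 1 : ℕ) : ℤ)) ≠ 0 :=
    sub_ne_zero.mpr (Ne.symm (by
      have := fne_qn hq1 hq (-((n + 1 : ℕ) : ℤ)) 0 (by omega)
      simpa using this))
  have s4 : (1 : ℝ) - q * q ^ n ≠ 0 := sub_ne_zero.mpr (Ne.symm (fne_q hq1 n))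
  have s8 : (1 : ℝ) - q * q ^ i ≠ 0 := sub_ne_zero.mpr (Ne.symm (fne_q hq1 i))
  have s2 : (1 : ℝ) - b * q⁻¹ * q ^ n ≠ 0 := sub_ne_zero.mpr (Ne.symm (by
    have := fne_b hq hbq (-1) n
    rwa [zpow_neg_one] at this))
  have s6 : (1 : ℝ) - a * b⁻¹ * q * q ^ i ≠ 0 :=
    sub_ne_zero.mpr (Ne.symm (fne_abq habq i))
  rw [z1] at s3 s1
  rw [z2] at s7
  generalize hg1 : qPoch q (q ^ (-(n : ℤ))) n = P1
  generalize hg2 : qPoch q (b * q⁻¹) n = P2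
  generalize hg3 : qPoch q (a⁻¹ * b * q ^ (-(n : ℤ))) n = P3
  generalize hg4 : qPoch q q n = P4
  generalize hg5 : qPoch q (q ^ (-(n : ℤ))) i = T1
  generalize hg6 : qPoch q (a * b⁻¹ * q) i = T2
  generalize hg7 : qPoch q (b⁻¹ * q ^ (2 - (n : ℤ))) i = T3
  generalize hg8 : qPoch q q i = T4
  rw [hg3] at n1
  rw [hg4] at n2
  rw [hg7] at n3
  rw [hg8] at n4
  have hB : (1 - a⁻¹ * b * (q ^ (n + 1))⁻¹) * P3 * (P4 * (1 - q * q ^ n)) ≠ 0 :=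
    mul_ne_zero (mul_ne_zero s3 n1) (mul_ne_zero n2 s4)
  have hD : (1 - b⁻¹ * (q ^ 2 * (q ^ (n + 1))⁻¹)) * T3 * (T4 * (1 - q * q ^ i)) ≠ 0 :=
    mul_ne_zero (mul_ne_zero s7 n3) (mul_ne_zero n4 s8)
  have hB' : P3 * P4 ≠ 0 := mul_ne_zero n1 n2
  have hD' : T3 * T4 ≠ 0 := mul_ne_zero n3 n4
  rw [div_mul_div_comm, div_mul_div_comm, div_pow, div_pow, div_mul_div_comm, div_mul_div_comm,
    div_mul_eq_mul_div, ← mul_div_assoc,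
    div_eq_div_iff (mul_ne_zero (mul_ne_zero hB hD) (pow_ne_zero _ ha))
      (mul_ne_zero (mul_ne_zero hB' hD') (pow_ne_zero _ ha))]
  have n5' : ((q : ℝ) ^ (n + 1))⁻¹ ≠ 0 := inv_ne_zero n5
  field_simp
  ring

include hq hq1 ha hb hbq habq in
lemma L0 (n : ℕ) :
    AAx q a b (n + 1) * ttx q a b (n + 1) 0 * (q ^ 2 / a) ^ 0
      = -(Bvx q a b n * pastroCoeff q a b n (n - 0)) := by
  have hcn : pastroCoeff q a b n (n - 0) = 1 := by
    have h1 : qPoch q (a⁻¹ * b * q ^ (1 - (n : ℤ))) n * qPoch q q n ≠ 0 :=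
      mul_ne_zero (nz_poch_ab hq habq _ _) (nz_poch_q hq1 _)
    have h2 : qPoch q (q ^ (-(n : ℤ))) n * qPoch q b n ≠ 0 :=
      mul_ne_zero (nz_poch_qn hq1 hq n n le_rfl) (nz_poch_b hbq _)
    rw [Nat.sub_zero, pastroCoeff, div_mul_div_comm, div_eq_one_iff_eq (mul_ne_zero h2 h1)]
    ring
  rw [hcn, mul_one]
  have httx : ttx q a b (n + 1) 0 = 1 := by
    rw [ttx, qPoch_zero, qPoch_zero, qPoch_zero, qPoch_zero]
    norm_num
  rw [httx, mul_one, pow_zero, mul_one]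
  have pair := qPoch_pair q hq (a⁻¹ * b) (by simp [ha, hb]) (n + 1)
  rw [show (a⁻¹ * b)⁻¹ * q = a * b⁻¹ * q by rw [mul_inv, inv_inv]] at pair
  have zB : ((a⁻¹ * b : ℝ)) ^ (-(n : ℤ) - 1) = ((a⁻¹ * b) ^ (n + 1))⁻¹ := by
    rw [show (-(n : ℤ) - 1) = -((n + 1 : ℕ) : ℤ) by push_cast; ring, zpow_neg, zpow_natCast]
  rw [AAx, Bvx, zB, pair]
  have pe : ((a⁻¹ * b : ℝ)) ^ (n + 1) = b ^ (n + 1) * (a ^ (n + 1))⁻¹ := by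
    rw [mul_pow, inv_pow, mul_comm]
  rw [pe]
  have N1 : qPoch q (q ^ (-((n + 1 : ℕ) : ℤ))) (n + 1) ≠ 0 := nz_poch_qn hq1 hq _ _ le_rfl
  have N2 : qPoch q (b * q⁻¹) (n + 1) ≠ 0 := nz_poch_bq hq hbq _
  have N5 : qPoch q (a * b⁻¹ * q) (n + 1) ≠ 0 := nz_poch_abq habq _
  have hpa : (a : ℝ) ^ (n + 1) ≠ 0 := pow_ne_zero _ ha
  have hpb : (b : ℝ) ^ (n + 1) ≠ 0 := pow_ne_zero _ hb
  rw [div_eq_iff (mul_ne_zero (mul_ne_zero hpb (inv_ne_zero hpa)) (mul_ne_zero N1 N5))]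
  generalize hx1 : qPoch q (q ^ (-((n + 1 : ℕ) : ℤ))) (n + 1) = X1
  generalize hx2 : qPoch q (b * q⁻¹) (n + 1) = X2
  generalize hx5 : qPoch q (a * b⁻¹ * q) (n + 1) = X5
  rw [hx1] at N1
  rw [hx2] at N2
  rw [hx5] at N5
  field_simp

set_option maxHeartbeats 1000000 in
include hq hq1 ha hb hbq habq in
lemma L2base (m : ℕ) :
    Bvx q a b (m + 1) * pastroCoeff q a b (m + 1) m *
        ((1 - a * b⁻¹ * q ^ (m + 1 + 1)) * (1 - q ^ (0 + 1)))
      = (1 - a * b⁻¹) * (q ^ (m + 1 + 1) - q ^ (0 + 1)) *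
        (AAx q a b (m + 1) * ttx q a b (m + 1) 0 * (q ^ 2 / a) ^ 0) := by
  have httx : ttx q a b (m + 1) 0 = 1 := by
    rw [ttx, qPoch_zero, qPoch_zero, qPoch_zero, qPoch_zero]
    norm_num
  rw [httx, mul_one, pow_zero, mul_one]
  have pair := qPoch_pair q hq (a⁻¹ * b) (by simp [ha, hb]) (m + 1)
  rw [show (a⁻¹ * b)⁻¹ * q = a * b⁻¹ * q by rw [mul_inv, inv_inv]] at pair
  have zB : ((a⁻¹ * b : ℝ)) ^ (-((m + 1 : ℕ) : ℤ) - 1) = a ^ (m + 2) * (b ^ (m + 2))⁻¹ := by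
    rw [show (-((m + 1 : ℕ) : ℤ) - 1) = -((m + 2 : ℕ) : ℤ) by push_cast; ring, zpow_neg,
      zpow_natCast, ← inv_pow, mul_inv, inv_inv, mul_pow, inv_pow]
  have pe : ((a⁻¹ * b : ℝ)) ^ (m + 1) = b ^ (m + 1) * (a ^ (m + 1))⁻¹ := by
    rw [mul_pow, inv_pow, mul_comm]
  rw [AAx, Bvx, pastroCoeff, zB, pair, pe]
  rw [qPoch_succ q (b * q⁻¹) (m + 1), qPoch_succ q (a * b⁻¹ * q) (m + 1),
    qPoch_succ q (a⁻¹ * b * q ^ (1 - ((m + 1 : ℕ) : ℤ))) m, qPoch_succ q q m,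
    qPoch_succ q (q ^ (-((m + 1 : ℕ) : ℤ))) m, qPoch_succ q b m]
  have zq1 : (q : ℝ) ^ (-((m + 1 : ℕ) : ℤ)) = (q ^ (m + 1))⁻¹ := by
    rw [zpow_neg, zpow_natCast]
  have zq2 : (q : ℝ) ^ (1 - ((m + 1 : ℕ) : ℤ)) = (q ^ m)⁻¹ := by
    rw [show (1 - ((m + 1 : ℕ) : ℤ)) = -(m : ℤ) by push_cast; ring, zpow_neg, zpow_natCast]
  rw [zq1, zq2]
  have t1 : (1 : ℝ) - a * b⁻¹ * q * q ^ (m + 1) ≠ 0 :=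
    sub_ne_zero.mpr (Ne.symm (fne_abq habq _))
  have t2 : (1 : ℝ) - (q ^ (m + 1))⁻¹ * q ^ m ≠ 0 := by
    have := fne_qn hq1 hq (-((m + 1 : ℕ) : ℤ)) m (by omega)
    rw [zq1] at this
    exact sub_ne_zero.mpr (Ne.symm this)
  have t3 : (1 : ℝ) - b * q ^ m ≠ 0 :=
    sub_ne_zero.mpr (Ne.symm (by have := hbq (m : ℤ); rwa [zpow_natCast] at this))
  have n1 : qPoch q (a⁻¹ * b * (q ^ m)⁻¹) m ≠ 0 := by
    have := nz_poch_ab hq habq (-(m : ℤ)) m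
    rwa [zpow_neg, zpow_natCast] at this
  have n2 : qPoch q q m ≠ 0 := nz_poch_q hq1 _
  have n3 : qPoch q ((q ^ (m + 1) : ℝ)⁻¹) m ≠ 0 := by
    have := nz_poch_qn hq1 hq (m + 1) m (by omega)
    rwa [zq1] at this
  have n4 : qPoch q b m ≠ 0 := nz_poch_b hbq _
  have n6 : qPoch q (a * b⁻¹ * q) (m + 1) ≠ 0 := nz_poch_abq habq _
  have hpa : (a : ℝ) ^ (m + 1) ≠ 0 := pow_ne_zero _ ha
  have hpb : (b : ℝ) ^ (m + 1) ≠ 0 := pow_ne_zero _ hb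
  have hD1 : qPoch q (a * b⁻¹ * q) (m + 1) * (1 - a * b⁻¹ * q * q ^ (m + 1)) *
      (qPoch q ((q ^ (m + 1) : ℝ)⁻¹) m * (1 - (q ^ (m + 1))⁻¹ * q ^ m) * (qPoch q b m * (1 - b * q ^ m)) *
        (qPoch q (a⁻¹ * b * (q ^ m)⁻¹) m * qPoch q q m)) ≠ 0 :=
    mul_ne_zero (mul_ne_zero n6 t1) (mul_ne_zero (mul_ne_zero (mul_ne_zero n3 t2)
      (mul_ne_zero n4 t3)) (mul_ne_zero n1 n2))
  have hD2 : b ^ (m + 1) * (a ^ (m + 1))⁻¹ *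
      (qPoch q ((q ^ (m + 1) : ℝ)⁻¹) m * (1 - (q ^ (m + 1))⁻¹ * q ^ m) *
        qPoch q (a * b⁻¹ * q) (m + 1)) ≠ 0 :=
    mul_ne_zero (mul_ne_zero hpb (inv_ne_zero hpa)) (mul_ne_zero (mul_ne_zero n3 t2) n6)
  rw [div_mul_div_comm, div_mul_div_comm, div_mul_eq_mul_div, ← mul_div_assoc,
    div_eq_div_iff hD1 hD2]
  field_simp
  ring

set_option maxHeartbeats 1000000 in
include hq hq1 ha hb hbq habq in
lemma hHlem (n m : ℕ) :
    pastroCoeff q a b n (m + 1) *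
        ((1 - a⁻¹ * b * q ^ (1 - (n : ℤ)) * q ^ m) * (1 - q * q ^ m))
      = (1 - q ^ (-(n : ℤ)) * q ^ m) * (1 - b * q ^ m) * pastroCoeff q a b n m := by
  rw [pastroCoeff, pastroCoeff,
    qPoch_succ q (q ^ (-(n : ℤ))) m, qPoch_succ q b m,
    qPoch_succ q (a⁻¹ * b * q ^ (1 - (n : ℤ))) m, qPoch_succ q q m]
  have A1 : qPoch q (q ^ (-(n : ℤ))) n ≠ 0 := nz_poch_qn hq1 hq n n le_rfl
  have A2 : qPoch q b n ≠ 0 := nz_poch_b hbq _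
  have A3 : qPoch q (a⁻¹ * b * q ^ (1 - (n : ℤ))) m ≠ 0 := nz_poch_ab hq habq _ _
  have A4 : qPoch q q m ≠ 0 := nz_poch_q hq1 _
  have u3 : (1 : ℝ) - a⁻¹ * b * q ^ (1 - (n : ℤ)) * q ^ m ≠ 0 :=
    sub_ne_zero.mpr (Ne.symm (fne_ab hq habq _ _))
  have u4 : (1 : ℝ) - q * q ^ m ≠ 0 := sub_ne_zero.mpr (Ne.symm (fne_q hq1 _))
  generalize qPoch q (a⁻¹ * b * q ^ (1 - (n : ℤ))) n = W at *
  generalize qPoch q q n = Qn at *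
  generalize hA1 : qPoch q (q ^ (-(n : ℤ))) n = En at *
  generalize hA2 : qPoch q b n = Bn at *
  generalize hA3 : qPoch q (a⁻¹ * b * q ^ (1 - (n : ℤ))) m = Wm at *
  generalize hA4 : qPoch q q m = Qm at *
  generalize qPoch q (q ^ (-(n : ℤ))) m = Em at *
  generalize qPoch q b m = Bm at *
  generalize hu3 : (1 : ℝ) - a⁻¹ * b * q ^ (1 - (n : ℤ)) * q ^ m = y3 at *
  generalize hu4 : (1 : ℝ) - q * q ^ m = y4 at *
  generalize (1 : ℝ) - q ^ (-(n : ℤ)) * q ^ m = y1 at *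
  generalize (1 : ℝ) - b * q ^ m = y2 at *
  field_simp

set_option maxHeartbeats 1000000 in
include hq hq1 ha hb hbq habq in
lemma hGlem (n i : ℕ) :
    AAx q a b n * ttx q a b n (i + 1) * (q ^ 2 / a) ^ (i + 1) *
        ((1 - b⁻¹ * q ^ (2 - (n : ℤ)) * q ^ i) * (1 - q * q ^ i) * a)
      = (1 - q ^ (-(n : ℤ)) * q ^ i) * (1 - a * b⁻¹ * q * q ^ i) * q ^ 2 *
        (AAx q a b n * ttx q a b n i * (q ^ 2 / a) ^ i) := by
  rw [ttx, ttx,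
    qPoch_succ q (q ^ (-(n : ℤ))) i, qPoch_succ q (a * b⁻¹ * q) i,
    qPoch_succ q (b⁻¹ * q ^ (2 - (n : ℤ))) i, qPoch_succ q q i]
  have A3 : qPoch q (b⁻¹ * q ^ (2 - (n : ℤ))) i ≠ 0 := nz_poch_binv hq hbq _ _
  have A4 : qPoch q q i ≠ 0 := nz_poch_q hq1 _
  have u3 : (1 : ℝ) - b⁻¹ * q ^ (2 - (n : ℤ)) * q ^ i ≠ 0 :=
    sub_ne_zero.mpr (Ne.symm (fne_binv hq hbq _ _))
  have u4 : (1 : ℝ) - q * q ^ i ≠ 0 := sub_ne_zero.mpr (Ne.symm (fne_q hq1 _))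
  generalize AAx q a b n = A at *
  generalize qPoch q (q ^ (-(n : ℤ))) i = Ei at *
  generalize qPoch q (a * b⁻¹ * q) i = Si at *
  generalize hA3 : qPoch q (b⁻¹ * q ^ (2 - (n : ℤ))) i = Ti at *
  generalize hA4 : qPoch q q i = Qi at *
  generalize hu3 : (1 : ℝ) - b⁻¹ * q ^ (2 - (n : ℤ)) * q ^ i = y3 at *
  generalize hu4 : (1 : ℝ) - q * q ^ i = y4 at *
  generalize (1 : ℝ) - q ^ (-(n : ℤ)) * q ^ i = y1 at *
  generalize (1 : ℝ) - a * b⁻¹ * q * q ^ i = y2 at *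
  field_simp
  have ha' : a * a⁻¹ = 1 := mul_inv_cancel₀ ha
  linear_combination (A * Ei * y1 * Si * y2 * q ^ 2 * q ^ (i * 2) * a⁻¹ ^ i) * ha'

set_option maxHeartbeats 1000000 in
include hq ha hb in
lemma S1lem (m i : ℕ) :
    (q ^ (m + i + 2 + 1) - q ^ (i + 1)) *
        ((1 - a⁻¹ * b * q ^ (1 - ((m + i + 2 : ℕ) : ℤ)) * q ^ m) * (1 - q * q ^ m)) *
        (1 - q ^ (i + 1 + 1)) *
        ((1 - b⁻¹ * q ^ (2 - ((m + i + 2 : ℕ) : ℤ)) * q ^ i) * (1 - q * q ^ i) * a)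
      = (q ^ (m + i + 2 + 1) - q ^ (i + 1 + 1)) *
        ((1 - q ^ (-((m + i + 2 : ℕ) : ℤ)) * q ^ m) * (1 - b * q ^ m)) *
        (1 - q ^ (i + 1)) *
        ((1 - q ^ (-((m + i + 2 : ℕ) : ℤ)) * q ^ i) * (1 - a * b⁻¹ * q * q ^ i)) * q ^ 2 := by
  have z1 : (q : ℝ) ^ (-((m + i + 2 : ℕ) : ℤ)) = (q ^ (m + i + 2))⁻¹ := by
    rw [zpow_neg, zpow_natCast]
  have z2 : (q : ℝ) ^ (1 - ((m + i + 2 : ℕ) : ℤ)) = q * (q ^ (m + i + 2))⁻¹ := by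
    rw [show (1 - ((m + i + 2 : ℕ) : ℤ)) = -((m + i + 2 : ℕ) : ℤ) + ((1 : ℕ) : ℤ) by push_cast; ring,
      zpow_add₀ hq, z1, zpow_natCast, mul_comm, pow_one]
  have z3 : (q : ℝ) ^ (2 - ((m + i + 2 : ℕ) : ℤ)) = q ^ 2 * (q ^ (m + i + 2))⁻¹ := by
    rw [show (2 - ((m + i + 2 : ℕ) : ℤ)) = -((m + i + 2 : ℕ) : ℤ) + ((2 : ℕ) : ℤ) by push_cast; ring,
      zpow_add₀ hq, z1, zpow_natCast, mul_comm]
  rw [z1, z2, z3]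
  have : (q : ℝ) ^ (m + i + 2) ≠ 0 := pow_ne_zero _ hq
  field_simp
  ring

set_option maxHeartbeats 1000000 in
include hq hq1 ha hb hbq habq in
lemma L2 (n i : ℕ) (h : i + 1 ≤ n) :
    Bvx q a b n * pastroCoeff q a b n (n - (i + 1)) *
        ((1 - a * b⁻¹ * q ^ (n + 1)) * (1 - q ^ (i + 1)))
      = (1 - a * b⁻¹) * (q ^ (n + 1) - q ^ (i + 1)) *
        (AAx q a b n * ttx q a b n i * (q ^ 2 / a) ^ i) := by
  induction i with
  | zero =>
    obtain ⟨m, rfl⟩ : ∃ m, n = m + 1 := ⟨n - 1, by omega⟩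
    have := L2base hq hq1 ha hb hbq habq m
    simpa using this
  | succ i IH =>
    have h' : i + 1 ≤ n := by omega
    specialize IH h'
    obtain ⟨m, rfl⟩ : ∃ m, n = m + i + 2 := ⟨n - i - 2, by omega⟩
    rw [show m + i + 2 - (i + 1 + 1) = m by omega]
    rw [show m + i + 2 - (i + 1) = m + 1 by omega] at IH
    have hH := hHlem hq hq1 ha hb hbq habq (m + i + 2) m
    have hG := hGlem hq hq1 ha hb hbq habq (m + i + 2) i
    have hS := S1lem hq ha hb m i
    have x1 : (1 : ℝ) - q ^ (-((m + i + 2 : ℕ) : ℤ)) * q ^ m ≠ 0 :=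
      sub_ne_zero.mpr (Ne.symm (fne_qn hq1 hq _ _ (by omega)))
    have x2 : (1 : ℝ) - b * q ^ m ≠ 0 :=
      sub_ne_zero.mpr (Ne.symm (by have := hbq (m : ℤ); rwa [zpow_natCast] at this))
    have x3 : (1 : ℝ) - q ^ (i + 1) ≠ 0 := by
      rw [pow_succ']
      exact sub_ne_zero.mpr (Ne.symm (fne_q hq1 _))
    have x4 : (1 : ℝ) - b⁻¹ * q ^ (2 - ((m + i + 2 : ℕ) : ℤ)) * q ^ i ≠ 0 :=
      sub_ne_zero.mpr (Ne.symm (fne_binv hq hbq _ _))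
    have x5 : (1 : ℝ) - q * q ^ i ≠ 0 := sub_ne_zero.mpr (Ne.symm (fne_q hq1 _))
    have hX : ((1 - q ^ (-((m + i + 2 : ℕ) : ℤ)) * q ^ m) * (1 - b * q ^ m)) *
        (1 - q ^ (i + 1)) *
        ((1 - b⁻¹ * q ^ (2 - ((m + i + 2 : ℕ) : ℤ)) * q ^ i) * (1 - q * q ^ i) * a) ≠ 0 :=
      mul_ne_zero (mul_ne_zero (mul_ne_zero x1 x2) x3)
        (mul_ne_zero (mul_ne_zero x4 x5) ha)
    apply mul_right_cancel₀ hX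
    linear_combination
      (-((1 - a * b⁻¹ * q ^ (m + i + 2 + 1)) * (1 - q ^ (i + 1 + 1)) * (1 - q ^ (i + 1)) *
          ((1 - b⁻¹ * q ^ (2 - ((m + i + 2 : ℕ) : ℤ)) * q ^ i) * (1 - q * q ^ i) * a) *
          Bvx q a b (m + i + 2))) * hH
      + (((1 - a⁻¹ * b * q ^ (1 - ((m + i + 2 : ℕ) : ℤ)) * q ^ m) * (1 - q * q ^ m)) *
          (1 - q ^ (i + 1 + 1)) *
          ((1 - b⁻¹ * q ^ (2 - ((m + i + 2 : ℕ) : ℤ)) * q ^ i) * (1 - q * q ^ i) * a)) * IH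
      + ((1 - a * b⁻¹) *
          (AAx q a b (m + i + 2) * ttx q a b (m + i + 2) i * (q ^ 2 / a) ^ i)) * hS
      + (-((1 - a * b⁻¹) * (q ^ (m + i + 2 + 1) - q ^ (i + 1 + 1)) *
          ((1 - q ^ (-((m + i + 2 : ℕ) : ℤ)) * q ^ m) * (1 - b * q ^ m)) *
          (1 - q ^ (i + 1)))) * hG

end Main
set_option maxHeartbeats 2000000 in
/-- Second Baxter recurrence: with `Q_n(x) = R_n(x⁻¹)`,
`Q_{n+1}(x) = x Q_n(x) - β_n x^n P_n(x⁻¹)` with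
`β_n = -(a⁻¹ b)^(-n-1) (b q⁻¹;q)_{n+1} / (a b⁻¹ q;q)_{n+1}`. -/
theorem pastro_baxter_second (q a b : ℝ) (hq : q ≠ 0) (hq1 : ∀ k : ℤ, k ≠ 0 → q ^ k ≠ 1)
    (ha : a ≠ 0) (hb : b ≠ 0)
    (hbq : ∀ m : ℤ, b * q ^ m ≠ 1) (habq : ∀ m : ℤ, a⁻¹ * b * q ^ m ≠ 1)
    (n : ℕ) (x : ℝ) (hx : x ≠ 0) :
    pastroR q a b (n + 1) x⁻¹ =
      x * pastroR q a b n x⁻¹ -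
        (-(a⁻¹ * b) ^ (-(n : ℤ) - 1) * qPoch q (b * q⁻¹) (n + 1) /
            qPoch q (a * b⁻¹ * q) (n + 1)) *
          x ^ n * pastroP q a b n x⁻¹ := by
  have hBv : (-(a⁻¹ * b) ^ (-(n : ℤ) - 1) * qPoch q (b * q⁻¹) (n + 1) /
      qPoch q (a * b⁻¹ * q) (n + 1)) = Bvx q a b n := rfl
  rw [hBv]
  have hxk : ∀ k : ℕ, (q ^ 2 / (a * x⁻¹)) ^ k = (q ^ 2 / a) ^ k * x ^ k := by
    intro k
    rw [← mul_pow]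
    congr 1
    field_simp
  -- LHS as a sum
  have hL : pastroR q a b (n + 1) x⁻¹
      = ∑ k ∈ Finset.range (n + 1 + 1),
          AAx q a b (n + 1) * ttx q a b (n + 1) k * (q ^ 2 / a) ^ k * x ^ k := by
    rw [pastroR_eq, Finset.mul_sum]
    refine Finset.sum_congr rfl fun k _ => ?_
    rw [hxk]
    ring
  -- x * R_n as a sum
  have hR1 : x * pastroR q a b n x⁻¹
      = ∑ i ∈ Finset.range (n + 1),
          AAx q a b n * ttx q a b n i * (q ^ 2 / a) ^ i * x ^ (i + 1) := by
    rw [pastroR_eq, Finset.mul_sum, Finset.mul_sum]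
    refine Finset.sum_congr rfl fun k _ => ?_
    rw [hxk]
    ring
  -- the P-term as a sum
  have hR2 : Bvx q a b n * x ^ n * pastroP q a b n x⁻¹
      = ∑ j ∈ Finset.range (n + 1),
          Bvx q a b n * pastroCoeff q a b n (n - j) * x ^ j := by
    rw [pastroP, Finset.mul_sum]
    rw [← Finset.sum_range_reflect (fun j => Bvx q a b n * pastroCoeff q a b n (n - j) * x ^ j)
      (n + 1)]
    refine Finset.sum_congr rfl fun k hk => ?_
    rw [Finset.mem_range] at hk
    have hk' : k ≤ n := by omega
    rw [show n + 1 - 1 - k = n - k by omega, show n - (n - k) = k by omega]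
    have hxx : (x : ℝ) ^ n * (x⁻¹) ^ k = x ^ (n - k) := by
      rw [show n = (n - k) + k by omega, pow_add]
      field_simp
      rw [Nat.add_sub_cancel, one_div, inv_pow, mul_assoc, mul_inv_cancel₀ (pow_ne_zero _ hx), mul_one]
    calc Bvx q a b n * x ^ n * (pastroCoeff q a b n k * x⁻¹ ^ k)
        = Bvx q a b n * pastroCoeff q a b n k * (x ^ n * (x⁻¹) ^ k) := by ring
      _ = Bvx q a b n * pastroCoeff q a b n k * x ^ (n - k) := by rw [hxx]
  rw [hL, hR1, hR2]
  -- nonvanishing of the cancellation factors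
  have dn1 : (1 : ℝ) - a * b⁻¹ * q ^ (n + 1) ≠ 0 := by
    have := fne_abq habq n
    rw [mul_assoc, ← pow_succ'] at this
    exact sub_ne_zero.mpr (Ne.symm this)
  have dq : ∀ i : ℕ, (1 : ℝ) - q ^ (i + 1) ≠ 0 := by
    intro i
    rw [pow_succ']
    exact sub_ne_zero.mpr (Ne.symm (fne_q hq1 _))
  -- middle coefficients
  have mid : ∀ i, i + 1 ≤ n →
      AAx q a b (n + 1) * ttx q a b (n + 1) (i + 1) * (q ^ 2 / a) ^ (i + 1)
        = AAx q a b n * ttx q a b n i * (q ^ 2 / a) ^ i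
          - Bvx q a b n * pastroCoeff q a b n (n - (i + 1)) := by
    intro i hi
    have l1 := L1 hq hq1 ha hb hbq habq n i (by omega)
    have l2 := L2 hq hq1 ha hb hbq habq n i hi
    have comb : (AAx q a b (n + 1) * ttx q a b (n + 1) (i + 1) * (q ^ 2 / a) ^ (i + 1)
        + Bvx q a b n * pastroCoeff q a b n (n - (i + 1))
        - AAx q a b n * ttx q a b n i * (q ^ 2 / a) ^ i) *
        ((1 - a * b⁻¹ * q ^ (n + 1)) * (1 - q ^ (i + 1))) = 0 := by
      linear_combination l1 + l2
    have := (mul_eq_zero.mp comb).resolve_right (mul_ne_zero dn1 (dq i))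
    linarith
  -- top coefficient
  have ftop : AAx q a b (n + 1) * ttx q a b (n + 1) (n + 1) * (q ^ 2 / a) ^ (n + 1)
      = AAx q a b n * ttx q a b n n * (q ^ 2 / a) ^ n := by
    have l1 := L1 hq hq1 ha hb hbq habq n n le_rfl
    have comb : (AAx q a b (n + 1) * ttx q a b (n + 1) (n + 1) * (q ^ 2 / a) ^ (n + 1)
        - AAx q a b n * ttx q a b n n * (q ^ 2 / a) ^ n) *
        ((1 - a * b⁻¹ * q ^ (n + 1)) * (1 - q ^ (n + 1))) = 0 := by
      linear_combination l1
    have := (mul_eq_zero.mp comb).resolve_right (mul_ne_zero dn1 (dq n))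
    linarith
  -- zeroth coefficient
  have f0 := L0 hq hq1 ha hb hbq habq n
  -- assemble
  rw [Finset.sum_range_succ' (fun k => AAx q a b (n + 1) * ttx q a b (n + 1) k *
    (q ^ 2 / a) ^ k * x ^ k) (n + 1)]
  rw [Finset.sum_range_succ' (fun j => Bvx q a b n * pastroCoeff q a b n (n - j) * x ^ j) n]
  rw [Finset.sum_range_succ (fun i => AAx q a b (n + 1) * ttx q a b (n + 1) (i + 1) *
    (q ^ 2 / a) ^ (i + 1) * x ^ (i + 1)) n]
  rw [Finset.sum_range_succ (fun i => AAx q a b n * ttx q a b n i * (q ^ 2 / a) ^ i *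
    x ^ (i + 1)) n]
  have hsum : ∑ i ∈ Finset.range n, AAx q a b (n + 1) * ttx q a b (n + 1) (i + 1) *
      (q ^ 2 / a) ^ (i + 1) * x ^ (i + 1)
      = (∑ i ∈ Finset.range n, AAx q a b n * ttx q a b n i * (q ^ 2 / a) ^ i * x ^ (i + 1))
        - ∑ i ∈ Finset.range n, Bvx q a b n * pastroCoeff q a b n (n - (i + 1)) * x ^ (i + 1) := by
    rw [← Finset.sum_sub_distrib]
    refine Finset.sum_congr rfl fun i hi => ?_
    rw [Finset.mem_range] at hi
    rw [mid i (by omega)]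
    ring
  rw [hsum, ftop]
  have f0' : AAx q a b (n + 1) * ttx q a b (n + 1) 0 * (q ^ 2 / a) ^ 0 * x ^ 0
      = -(Bvx q a b n * pastroCoeff q a b n (n - 0) * x ^ 0) := by
    rw [f0]
    ring
  rw [f0']
  ring
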